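/- Let Γ > 0 and let (γ_k)_{k ≥ 0} be a sequence of real numbers with γ_0 ≥ Γ²/9 and γ_{k+1} ≥ γ_k + Γ·√(γ_k) for all k ≥ 0. Then γ_k ≥ (Γ²/9)·k² for all k ≥ 0. -/
import Mathlib


/-- If `Γ > 0`, `γ 0 ≥ Γ²/9` and `γ (k+1) ≥ γ k + Γ·√(γ k)` for all `k`,
then `γ k ≥ (Γ²/9)·k²` for all `k`. -/
theorem stmt_5 (Γ : ℝ) (hΓ : 0 < Γ) (γ : ℕ → ℝ)
    (h0 : Γ ^ 2 / 9 ≤ γ 0)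
    (hrec : ∀ k : ℕ, γ k + Γ * Real.sqrt (γ k) ≤ γ (k + 1)) :
    ∀ k : ℕ, Γ ^ 2 / 9 * (k : ℝ) ^ 2 ≤ γ k := by
  have hc : (0:ℝ) ≤ Γ ^ 2 / 9 := by positivity
  intro k
  induction k with
  | zero => simpa using hc.trans h0
  | succ n ih =>
    have hγn : (0:ℝ) ≤ γ n := le_trans (by positivity) ih
    have h1 : Γ^2/9 * (n:ℝ)^2 + Γ * Real.sqrt (Γ^2/9 * (n:ℝ)^2) ≤ γ (n+1) := by
      calc Γ^2/9 * (n:ℝ)^2 + Γ * Real.sqrt (Γ^2/9 * (n:ℝ)^2)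
          ≤ γ n + Γ * Real.sqrt (γ n) := by
            have := Real.sqrt_le_sqrt ih
            have h2 : Γ * Real.sqrt (Γ^2/9 * (n:ℝ)^2) ≤ Γ * Real.sqrt (γ n) := by
              exact mul_le_mul_of_nonneg_left this hΓ.le
            linarith
        _ ≤ γ (n+1) := hrec n
    have hs : Real.sqrt (Γ^2/9 * (n:ℝ)^2) = Γ/3 * n := by
      rw [show Γ^2/9 * (n:ℝ)^2 = (Γ/3 * n)^2 by ring, Real.sqrt_sq (by positivity)]
    rw [hs] at h1
    cases n with
    | zero =>
      have h2 : (0:ℝ) ≤ Γ * Real.sqrt (γ 0) := by positivity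
      have := hrec 0
      push_cast
      nlinarith
    | succ m =>
      have hn1 : (1:ℝ) ≤ ((m:ℝ) + 1) := by linarith [show (0:ℝ) ≤ (m:ℝ) from Nat.cast_nonneg m]
      push_cast at h1 ⊢
      nlinarith
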